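/- arXiv:1009.0185 — 2 statements merged into one kernel-verified Lean document; each statement's English description precedes it below -/
import Mathlib

section
/- For every m ≥ 1, the number of normal DD-words of degree m in an alphabet X of size n is f(m)·n^m, where f(m) are the Catalan numbers defined by f(0) = 1 and f(m) = ∑_{i=0}^{m−1} f(i) f(m−1−i). Equivalently, the dimension over k of the degree-m homogeneous component of the free dendriform algebra DD(X) with |X| = n is (2m)!·n^m / ((m+1)!·m!). -/
/-- Normal `DD`-words over an alphabet `X`: either a letter `x`,
or `x ≺ v`, or `x ≻ v`, or `(x ≻ u₁) ≻ u₂`, with `x` a letter and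
`v, u₁, u₂` normal `DD`-words. -/
inductive DDWord (X : Type) where
  | ltr : X → DDWord X
  | precW : X → DDWord X → DDWord X
  | succW : X → DDWord X → DDWord X
  | succ2 : X → DDWord X → DDWord X → DDWord X

/-- The degree of a normal `DD`-word: the number of letter occurrences. -/
def DDWord.deg {X : Type} : DDWord X → ℕ
  | .ltr _ => 1
  | .precW _ v => 1 + v.deg
  | .succW _ v => 1 + v.deg
  | .succ2 _ u v => 1 + u.deg + v.deg

deriving instance DecidableEq for DDWord

open Finset

def W (n : ℕ) : ℕ → Finset (DDWord (Fin n))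
  | 0 => ∅
  | 1 => Finset.univ.image DDWord.ltr
  | (m+2) =>
      ((Finset.univ ×ˢ W n (m+1)).image fun p => DDWord.precW p.1 p.2) ∪
      ((Finset.univ ×ˢ W n (m+1)).image fun p => DDWord.succW p.1 p.2) ∪
      (Finset.range (m+1)).attach.biUnion fun i =>
        ((Finset.univ : Finset (Fin n)) ×ˢ (W n (i.1+1) ×ˢ W n (m - i.1))).image
          fun p => DDWord.succ2 p.1 p.2.1 p.2.2
  decreasing_by
  all_goals first
    | omega
    | (have := i.2; simp only [Finset.mem_range] at this; omega)

theorem DDWord.one_le_deg {X : Type} (w : DDWord X) : 1 ≤ w.deg := by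
  cases w <;> simp [DDWord.deg] <;> omega

theorem deg_of_mem_W (n : ℕ) : ∀ m, ∀ w ∈ W n m, w.deg = m := by
  intro m
  induction m using Nat.strong_induction_on with
  | _ m ih =>
    match m with
    | 0 => intro w hw; simp [W] at hw
    | 1 =>
      intro w hw
      simp only [W, Finset.mem_image, Finset.mem_univ] at hw
      obtain ⟨x, -, rfl⟩ := hw
      rfl
    | (m+2) =>
      intro w hw
      simp only [W, Finset.mem_union, Finset.mem_image, Finset.mem_biUnion,
        Finset.mem_attach, Finset.mem_product, Finset.mem_univ, true_and] at hw
      rcases hw with (⟨p, hp, rfl⟩ | ⟨p, hp, rfl⟩) | ⟨i, p, hp, rfl⟩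
      · have := ih (m+1) (by omega) p.2 hp
        simp [DDWord.deg, this]; omega
      · have := ih (m+1) (by omega) p.2 hp
        simp [DDWord.deg, this]; omega
      · have hi := i.2
        simp only [Finset.mem_range] at hi
        have h1 := ih (i.1+1) (by omega) p.2.1 hp.1
        have h2 := ih (m - i.1) (by omega) p.2.2 hp.2
        simp [DDWord.deg, h1, h2]; omega

theorem mem_W_of_deg (n : ℕ) : ∀ w : DDWord (Fin n), w ∈ W n w.deg := by
  intro w
  induction w with
  | ltr x => simp [DDWord.deg, W]
  | precW x v ihv =>
    obtain ⟨k, hk⟩ : ∃ k, v.deg = k + 1 := ⟨v.deg - 1, by have := v.one_le_deg; omega⟩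
    have h2 : (DDWord.precW x v).deg = k + 2 := by simp [DDWord.deg, hk]; omega
    rw [h2]
    simp only [W, Finset.mem_union, Finset.mem_image]
    exact Or.inl <| Or.inl ⟨(x, v), by simpa [hk] using ihv, rfl⟩
  | succW x v ihv =>
    obtain ⟨k, hk⟩ : ∃ k, v.deg = k + 1 := ⟨v.deg - 1, by have := v.one_le_deg; omega⟩
    have h2 : (DDWord.succW x v).deg = k + 2 := by simp [DDWord.deg, hk]; omega
    rw [h2]
    simp only [W, Finset.mem_union, Finset.mem_image]
    exact Or.inl <| Or.inr ⟨(x, v), by simpa [hk] using ihv, rfl⟩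
  | succ2 x u v ihu ihv =>
    obtain ⟨a, ha⟩ : ∃ a, u.deg = a + 1 := ⟨u.deg - 1, by have := u.one_le_deg; omega⟩
    obtain ⟨b, hb⟩ : ∃ b, v.deg = b + 1 := ⟨v.deg - 1, by have := v.one_le_deg; omega⟩
    have h2 : (DDWord.succ2 x u v).deg = (a + b + 1) + 2 := by simp [DDWord.deg, ha, hb]; omega
    rw [h2]
    simp only [W, Finset.mem_union, Finset.mem_biUnion, Finset.mem_attach, Finset.mem_image,
      Finset.mem_product, Finset.mem_univ, true_and]
    refine Or.inr ⟨⟨a, by simp only [Finset.mem_range]; omega⟩, (x, u, v), ⟨?_, ?_⟩, rfl⟩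
    · simpa [ha] using ihu
    · have : a + b + 1 - a = b + 1 := by omega
      rw [this]; simpa [hb] using ihv

theorem mem_W_iff (n m : ℕ) (w : DDWord (Fin n)) : w ∈ W n m ↔ w.deg = m :=
  ⟨fun h => deg_of_mem_W n m w h, fun h => h ▸ mem_W_of_deg n w⟩

theorem card_W (n : ℕ) (f : ℕ → ℕ) (h0 : f 0 = 1)
    (hrec : ∀ j : ℕ, 1 ≤ j → f j = ∑ i ∈ Finset.range j, f i * f (j - 1 - i)) :
    ∀ m, 1 ≤ m → (W n m).card = f m * n ^ m := by
  intro m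
  induction m using Nat.strong_induction_on with
  | _ m ih =>
    match m with
    | 0 => intro h; omega
    | 1 =>
      intro _
      have hf1 : f 1 = 1 := by simpa [h0] using hrec 1 le_rfl
      have hltr : Function.Injective (DDWord.ltr : Fin n → DDWord (Fin n)) := by
        intro a b h; injection h
      have : (W n 1).card = n := by
        rw [show W n 1 = Finset.univ.image DDWord.ltr from by rw [W],
          Finset.card_image_of_injective _ hltr]
        simp
      simp [this, hf1]
    | (m+2) =>
      intro _
      set A := ((Finset.univ ×ˢ W n (m+1)).image
        fun p => DDWord.precW p.1 p.2) with hA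
      set B := ((Finset.univ ×ˢ W n (m+1)).image
        fun p => DDWord.succW p.1 p.2) with hB
      set C := ((Finset.range (m+1)).attach.biUnion fun i =>
        ((Finset.univ : Finset (Fin n)) ×ˢ (W n (i.1+1) ×ˢ W n (m - i.1))).image
          fun p => DDWord.succ2 p.1 p.2.1 p.2.2) with hC
      have hW2 : W n (m+2) = A ∪ B ∪ C := by rw [W]
      -- injectivity facts
      have injP : Function.Injective
          (fun p : Fin n × DDWord (Fin n) => DDWord.precW p.1 p.2) := by
        rintro ⟨a, b⟩ ⟨c, d⟩ h
        obtain ⟨h1, h2⟩ := DDWord.precW.inj h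
        simp_all
      have injS : Function.Injective
          (fun p : Fin n × DDWord (Fin n) => DDWord.succW p.1 p.2) := by
        rintro ⟨a, b⟩ ⟨c, d⟩ h
        obtain ⟨h1, h2⟩ := DDWord.succW.inj h
        simp_all
      have inj2 : Function.Injective
          (fun p : Fin n × (DDWord (Fin n) × DDWord (Fin n)) =>
            DDWord.succ2 p.1 p.2.1 p.2.2) := by
        rintro ⟨a, b, c⟩ ⟨d, e, g⟩ h
        obtain ⟨h1, h2, h3⟩ := DDWord.succ2.inj h
        simp_all
      -- disjointness
      have hAB : Disjoint A B := by
        simp only [hA, hB, Finset.disjoint_left, Finset.mem_image]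
        rintro w ⟨p, -, rfl⟩ ⟨q, -, h⟩
        cases h
      have hABC : Disjoint (A ∪ B) C := by
        simp only [hA, hB, hC, Finset.disjoint_left, Finset.mem_union, Finset.mem_image,
          Finset.mem_biUnion, Finset.mem_attach, true_and]
        rintro w (⟨p, -, rfl⟩ | ⟨p, -, rfl⟩) ⟨i, q, hq, h⟩ <;> cases h
      -- cards of the pieces
      have cardA : A.card = n * (W n (m+1)).card := by
        rw [hA, Finset.card_image_of_injective _ injP, Finset.card_product]
        simp
      have cardB : B.card = n * (W n (m+1)).card := by
        rw [hB, Finset.card_image_of_injective _ injS, Finset.card_product]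
        simp
      have cardC : C.card = ∑ i ∈ Finset.range (m+1),
          n * ((W n (i+1)).card * (W n (m-i)).card) := by
        rw [hC, Finset.card_biUnion]
        · rw [← Finset.sum_attach (Finset.range (m+1))
            (fun i => n * ((W n (i+1)).card * (W n (m-i)).card))]
          apply Finset.sum_congr rfl
          intro i _
          rw [Finset.card_image_of_injective _ inj2, Finset.card_product,
            Finset.card_product]
          simp [mul_assoc]
        · intro i _ j _ hij
          simp only [Finset.disjoint_left, Finset.mem_image, Finset.mem_product,
            Finset.mem_univ, true_and]
          rintro w ⟨p, hp, rfl⟩ ⟨q, hq, h⟩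
          obtain ⟨h1, h2, h3⟩ := DDWord.succ2.inj h
          apply hij
          have d1 := deg_of_mem_W n _ _ hp.1
          have d2 := deg_of_mem_W n _ _ hq.1
          rw [h2] at d2
          exact Subtype.ext (by omega)
      have hcard : (W n (m+2)).card = n * (W n (m+1)).card + n * (W n (m+1)).card
          + ∑ i ∈ Finset.range (m+1), n * ((W n (i+1)).card * (W n (m-i)).card) := by
        rw [hW2, Finset.card_union_of_disjoint hABC, Finset.card_union_of_disjoint hAB,
          cardA, cardB, cardC]
      -- now the numerics
      have ih1 : (W n (m+1)).card = f (m+1) * n ^ (m+1) := ih (m+1) (by omega) (by omega)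
      have hsum : ∑ i ∈ Finset.range (m+1), n * ((W n (i+1)).card * (W n (m-i)).card)
          = (∑ i ∈ Finset.range m, f (i+1) * f (m-i)) * n ^ (m+2) := by
        rw [Finset.sum_range_succ, show m - m = 0 from by omega,
          show (W n 0).card = 0 from by rw [W]; rfl]
        rw [mul_zero, mul_zero, add_zero, Finset.sum_mul]
        apply Finset.sum_congr rfl
        intro i hi
        rw [Finset.mem_range] at hi
        rw [ih (i+1) (by omega) (by omega), ih (m-i) (by omega) (by omega)]
        have hp : n ^ (i+1) * n ^ (m-i) = n ^ (m+1) := by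
          rw [← pow_add]; congr 1; omega
        calc n * (f (i+1) * n ^ (i+1) * (f (m-i) * n ^ (m-i)))
            = f (i+1) * f (m-i) * (n * (n ^ (i+1) * n ^ (m-i))) := by ring
          _ = f (i+1) * f (m-i) * (n * n ^ (m+1)) := by rw [hp]
          _ = f (i+1) * f (m-i) * n ^ (m+2) := by ring
      have hf : f (m+2) = 2 * f (m+1) + ∑ i ∈ Finset.range m, f (i+1) * f (m-i) := by
        have h := hrec (m+2) (by omega)
        rw [Finset.sum_range_succ, Finset.sum_range_succ'] at h
        have e3 : ∀ i ∈ Finset.range m,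
            f (i+1) * f (m + 2 - 1 - (i+1)) = f (i+1) * f (m-i) := by
          intro i _
          rw [show m + 2 - 1 - (i+1) = m - i from by omega]
        rw [Finset.sum_congr rfl e3, show m + 2 - 1 - (m+1) = 0 from by omega,
          show m + 2 - 1 - 0 = m + 1 from by omega, h0, mul_one, one_mul] at h
        omega
      rw [hcard, ih1, hsum, hf]
      ring

theorem catalan_rec : ∀ j : ℕ, 1 ≤ j →
    catalan j = ∑ i ∈ Finset.range j, catalan i * catalan (j - 1 - i) := by
  intro j hj
  obtain ⟨k, rfl⟩ : ∃ k, j = k + 1 := ⟨j - 1, by omega⟩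
  rw [catalan_succ,
    ← Fin.sum_univ_eq_sum_range (fun i => catalan i * catalan (k + 1 - 1 - i)) (k+1)]
  apply Finset.sum_congr rfl
  intro i _
  rw [show k + 1 - 1 - (i : ℕ) = k - (i : ℕ) from by omega]

theorem catalan_factorial (m : ℕ) :
    (2 * m).factorial / ((m + 1).factorial * m.factorial) = catalan m := by
  have hcb : Nat.centralBinom m * (m.factorial * m.factorial) = (2 * m).factorial := by
    have h := Nat.choose_mul_factorial_mul_factorial (show m ≤ 2 * m by omega)
    rw [show 2 * m - m = m from by omega] at h
    rw [Nat.centralBinom, ← h]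
    ring
  have h2 : (2 * m).factorial = catalan m * ((m + 1).factorial * m.factorial) := by
    rw [← hcb, ← succ_mul_catalan_eq_centralBinom, Nat.factorial_succ]
    ring
  rw [h2, Nat.mul_div_cancel _ (by positivity)]

/-- For `m ≥ 1` the number of normal `DD`-words of degree `m` over an
`n`-letter alphabet is `f m * n^m`, where `f` satisfies the Catalan recursion;
equivalently it is `(2m)!/((m+1)!·m!) · n^m`, the dimension of the degree-`m`
component of the free dendriform algebra on `n` generators. -/
theorem card_normal_DDwords (n m : ℕ) (hm : 1 ≤ m) (f : ℕ → ℕ) (h0 : f 0 = 1)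
    (hrec : ∀ j : ℕ, 1 ≤ j → f j = ∑ i ∈ Finset.range j, f i * f (j - 1 - i)) :
    Nat.card {w : DDWord (Fin n) // w.deg = m} = f m * n ^ m ∧
    Nat.card {w : DDWord (Fin n) // w.deg = m}
      = (2 * m).factorial / ((m + 1).factorial * m.factorial) * n ^ m := by
  have key : ∀ g : ℕ → ℕ, g 0 = 1 →
      (∀ j : ℕ, 1 ≤ j → g j = ∑ i ∈ Finset.range j, g i * g (j - 1 - i)) →
      Nat.card {w : DDWord (Fin n) // w.deg = m} = g m * n ^ m := by
    intro g hg0 hgrec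
    have e : {w : DDWord (Fin n) // w.deg = m} ≃ {w // w ∈ W n m} :=
      Equiv.subtypeEquivRight fun w => (mem_W_iff n m w).symm
    rw [Nat.card_congr e, Nat.card_eq_finsetCard, card_W n g hg0 hgrec m hm]
  exact ⟨key f h0 hrec, by rw [key catalan catalan_zero catalan_rec, catalan_factorial]⟩
end

section
/- Let A(t) = (1 − 2nt − √(1 − 4nt))/2. Then A(t) satisfies the functional equation A(t) = n²t² + nt·(2A(t) + C(t)) where C(t) = nt·(nt + 2A(t) + C(t))², and moreover A(0) = 0. Equivalently, A(t) is the unique power series solution with zero constant term of the quadratic equation A² − (1 − 2nt)A + n²t² = 0 arising from eliminating C. -/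
/-- For `n ≥ 1`, the function `A(t) = (1 − 2nt − √(1 − 4nt))/2` vanishes at `0`,
satisfies the quadratic equation `A² − (1 − 2nt)A + n²t² = 0` obtained by eliminating
`C`, and together with some `C(t)` solves the system
`A = n²t² + nt(2A + C)`, `C = nt(nt + 2A + C)²` on `|t| < 1/(4n)`. -/
theorem dendriform_A_series_functional_equation (n : ℕ) (hn : 1 ≤ n) (A : ℝ → ℝ)
    (hA : ∀ t : ℝ, A t = (1 - 2 * n * t - Real.sqrt (1 - 4 * n * t)) / 2) :
    A 0 = 0 ∧
    (∀ t : ℝ, |t| < 1 / (4 * n) →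
      (A t) ^ 2 - (1 - 2 * n * t) * A t + n ^ 2 * t ^ 2 = 0) ∧
    ∃ C : ℝ → ℝ, ∀ t : ℝ, |t| < 1 / (4 * n) →
      A t = n ^ 2 * t ^ 2 + n * t * (2 * A t + C t) ∧
      C t = n * t * (n * t + 2 * A t + C t) ^ 2 := by
  have hn0 : (0 : ℝ) < n := by exact_mod_cast hn
  have hA0 : A 0 = 0 := by
    rw [hA]; simp
  have hquad : ∀ t : ℝ, |t| < 1 / (4 * n) →
      (A t) ^ 2 - (1 - 2 * n * t) * A t + n ^ 2 * t ^ 2 = 0 := by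
    intro t ht
    have ht' : t < 1 / (4 * n) := lt_of_abs_lt ht
    have hpos : (0 : ℝ) ≤ 1 - 4 * n * t := by
      have h4n : (0 : ℝ) < 4 * n := by positivity
      nlinarith [(lt_div_iff₀ h4n).mp ht']
    have hs := Real.sq_sqrt hpos
    rw [hA]
    nlinarith [hs]
  refine ⟨hA0, hquad, fun t => (A t) ^ 2 / (n * t), fun t ht => ?_⟩
  rcases eq_or_ne t 0 with rfl | ht0
  · simp [hA0]
  · have hnt : (n : ℝ) * t ≠ 0 := mul_ne_zero (ne_of_gt hn0) ht0
    have hq := hquad t ht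
    have hsq : (n * t + A t) ^ 2 = A t := by nlinarith [hq]
    have hC : (A t) ^ 2 / (n * t) * (n * t) = (A t) ^ 2 := div_mul_cancel₀ _ hnt
    constructor
    · field_simp
      nlinarith [hsq]
    · have hX : (↑n * t + 2 * A t) * (↑n * t) + A t ^ 2 = A t := by linear_combination hsq
      field_simp
      linear_combination (-((↑n * t + A t) ^ 2 + A t)) * hsq
end
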